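/- arXiv:2210.09735 — 3 statements merged into one kernel-verified Lean document; each statement's English description precedes it below -/
import Mathlib

section
/- Let Θ̂ ∈ ℝ^{d×d} be Schur stable and Φ̂ ≻ 0, and set V̂ = Σ_{t=0}^∞ Θ̂ᵗ Φ̂ (Θ̂ᵀ)ᵗ. Then the operator T(X) = Σ_{t=0}^∞ Θ̂ᵗ X (Θ̂ᵀ)ᵗ (acting on symmetric matrices) has induced operator norm satisfying ‖T‖ ≤ ‖V̂‖ / σ_min(Φ̂). -/
open Matrix

/-- A real square matrix is Schur stable iff every (complex) spectral value has
modulus strictly less than 1. -/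
def IsSchur {d : ℕ} (A : Matrix (Fin d) (Fin d) ℝ) : Prop :=
  ∀ z ∈ spectrum ℂ (A.map Complex.ofReal), ‖z‖ < 1

/-- The spectral (2-induced) norm of a real matrix. -/
noncomputable def specNorm {a b : ℕ} (A : Matrix (Fin a) (Fin b) ℝ) : ℝ :=
  ‖LinearMap.toContinuousLinearMap (Matrix.toEuclideanLin A)‖

section AuxGeneral

open scoped RealInnerProductSpace

/-- The operator-norm bound for symmetric operators via the quadratic form. -/
lemma aux_opNorm_le {E : Type*} [NormedAddCommGroup E] [InnerProductSpace ℝ E]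
    (T : E →L[ℝ] E) {K : ℝ} (hK : 0 ≤ K)
    (hsym : ∀ u v : E, ⟪T u, v⟫ = ⟪u, T v⟫)
    (h : ∀ v : E, |⟪v, T v⟫| ≤ K * ‖v‖ ^ 2) : ‖T‖ ≤ K := by
  have hsym' : ∀ u v : E, ⟪v, T u⟫ = ⟪u, T v⟫ := fun u v => by
    rw [real_inner_comm]; exact hsym u v
  have key : ∀ u v : E, ⟪u, T v⟫ ≤ K * (‖u‖ ^ 2 + ‖v‖ ^ 2) / 2 := by
    intro u v
    have h1 := (abs_le.mp (h (u + v))).2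
    have h2 := (abs_le.mp (h (u - v))).1
    have e1 : ⟪u + v, T (u + v)⟫ = ⟪u, T u⟫ + 2 * ⟪u, T v⟫ + ⟪v, T v⟫ := by
      rw [map_add]
      simp only [inner_add_left, inner_add_right]
      rw [hsym' u v]; ring
    have e2 : ⟪u - v, T (u - v)⟫ = ⟪u, T u⟫ - 2 * ⟪u, T v⟫ + ⟪v, T v⟫ := by
      rw [map_sub]
      simp only [inner_sub_left, inner_sub_right]
      rw [hsym' u v]; ring
    have p1 : ‖u + v‖ ^ 2 = ‖u‖ ^ 2 + 2 * ⟪u, v⟫ + ‖v‖ ^ 2 := norm_add_sq_real u v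
    have p2 : ‖u - v‖ ^ 2 = ‖u‖ ^ 2 - 2 * ⟪u, v⟫ + ‖v‖ ^ 2 := norm_sub_sq_real u v
    rw [e1, p1] at h1
    rw [e2, p2] at h2
    linarith
  refine T.opNorm_le_bound hK fun v => ?_
  by_cases hTv : T v = 0
  · rw [hTv, norm_zero]; positivity
  · have hTvn : 0 < ‖T v‖ := norm_pos_iff.mpr hTv
    have hvn : 0 < ‖v‖ := by
      rcases eq_or_ne v 0 with rfl | hv
      · exact absurd (map_zero T) hTv
      · exact norm_pos_iff.mpr hv
    have := key ((‖v‖ / ‖T v‖) • T v) v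
    rw [real_inner_smul_left, real_inner_self_eq_norm_sq, norm_smul, Real.norm_eq_abs,
      abs_of_nonneg (by positivity)] at this
    have hdiv : ‖v‖ / ‖T v‖ * ‖T v‖ = ‖v‖ := div_mul_cancel₀ _ hTvn.ne'
    have h2 : ‖v‖ * ‖T v‖ ≤ K * ‖v‖ ^ 2 := by
      have lhs : ‖v‖ / ‖T v‖ * ‖T v‖ ^ 2 = ‖v‖ * ‖T v‖ := by field_simp
      have rhs : (‖v‖ / ‖T v‖ * ‖T v‖) ^ 2 = ‖v‖ ^ 2 := by rw [hdiv]
      rw [lhs, rhs] at this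
      linarith
    nlinarith

/-- The matrix as a continuous linear map on Euclidean space. -/
noncomputable def mCLM {d : ℕ} (A : Matrix (Fin d) (Fin d) ℝ) :
    EuclideanSpace ℝ (Fin d) →L[ℝ] EuclideanSpace ℝ (Fin d) :=
  LinearMap.toContinuousLinearMap (Matrix.toEuclideanLin A)

lemma specNorm_eq_norm_mCLM {d : ℕ} (A : Matrix (Fin d) (Fin d) ℝ) :
    specNorm A = ‖mCLM A‖ := rfl

lemma specNorm_nonneg {d : ℕ} (A : Matrix (Fin d) (Fin d) ℝ) : 0 ≤ specNorm A :=
  norm_nonneg _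

lemma inner_mCLM {d : ℕ} (A : Matrix (Fin d) (Fin d) ℝ) (u v : EuclideanSpace ℝ (Fin d)) :
    ⟪u, mCLM A v⟫ = (WithLp.equiv 2 _ u) ⬝ᵥ (A *ᵥ (WithLp.equiv 2 _ v)) := by
  rw [EuclideanSpace.inner_eq_star_dotProduct, dotProduct_comm]; rfl

lemma norm_sq_eq_dot {d : ℕ} (u : EuclideanSpace ℝ (Fin d)) :
    ‖u‖ ^ 2 = (WithLp.equiv 2 _ u) ⬝ᵥ (WithLp.equiv 2 _ u) := by
  rw [← real_inner_self_eq_norm_sq]; rfl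

lemma abs_dot_le {d : ℕ} (A : Matrix (Fin d) (Fin d) ℝ) (x : Fin d → ℝ) :
    |x ⬝ᵥ (A *ᵥ x)| ≤ specNorm A * (x ⬝ᵥ x) := by
  set u : EuclideanSpace ℝ (Fin d) := (WithLp.equiv 2 _).symm x with hu
  have hx : WithLp.equiv 2 (Fin d → ℝ) u = x := rfl
  have h1 : x ⬝ᵥ (A *ᵥ x) = ⟪u, mCLM A u⟫ := by rw [inner_mCLM, hx]
  have h2 : x ⬝ᵥ x = ‖u‖ ^ 2 := by rw [norm_sq_eq_dot, hx]
  rw [h1, h2]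
  calc |⟪u, mCLM A u⟫| ≤ ‖u‖ * ‖mCLM A u‖ := abs_real_inner_le_norm u _
    _ ≤ ‖u‖ * (‖mCLM A‖ * ‖u‖) :=
        mul_le_mul_of_nonneg_left ((mCLM A).le_opNorm u) (norm_nonneg u)
    _ = specNorm A * ‖u‖ ^ 2 := by rw [specNorm_eq_norm_mCLM]; ring

lemma mCLM_symm {d : ℕ} {S : Matrix (Fin d) (Fin d) ℝ} (hS : Sᵀ = S)
    (u v : EuclideanSpace ℝ (Fin d)) : ⟪mCLM S u, v⟫ = ⟪u, mCLM S v⟫ := by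
  rw [real_inner_comm, inner_mCLM, inner_mCLM]
  calc (WithLp.equiv 2 _ v) ⬝ᵥ (S *ᵥ (WithLp.equiv 2 _ u))
      = ((WithLp.equiv 2 _ v) ᵥ* S) ⬝ᵥ (WithLp.equiv 2 _ u) := dotProduct_mulVec _ _ _
    _ = (S *ᵥ (WithLp.equiv 2 _ v)) ⬝ᵥ (WithLp.equiv 2 _ u) := by
        conv_lhs => rw [← hS, vecMul_transpose]
    _ = (WithLp.equiv 2 _ u) ⬝ᵥ (S *ᵥ (WithLp.equiv 2 _ v)) := dotProduct_comm _ _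

end AuxGeneral

section AuxScoped

open Filter
open scoped Matrix.Norms.L2Operator NNReal ENNReal Topology

lemma specNorm_eq_l2 {d : ℕ} (A : Matrix (Fin d) (Fin d) ℝ) : specNorm A = ‖A‖ := rfl

lemma conjT_eq_transpose {d : ℕ} (A : Matrix (Fin d) (Fin d) ℝ) : Aᴴ = Aᵀ :=
  Matrix.ext fun _ _ => star_trivial _

set_option maxHeartbeats 1000000 in
lemma specNorm_le_complex {d : ℕ} (A : Matrix (Fin d) (Fin d) ℝ) :
    specNorm A ≤ ‖A.map Complex.ofReal‖ := by
  rw [specNorm_eq_l2, Matrix.l2_opNorm_def]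
  apply ContinuousLinearMap.opNorm_le_bound _ (norm_nonneg _)
  intro x
  set xc : EuclideanSpace ℂ (Fin d) :=
    (WithLp.equiv 2 _).symm (fun i => ((WithLp.equiv 2 _ x) i : ℂ)) with hxc
  have hnx : ‖xc‖ = ‖x‖ := by
    rw [EuclideanSpace.norm_eq, EuclideanSpace.norm_eq]
    congr 1
    exact Finset.sum_congr rfl fun i _ => by simp [xc]
  have happ : ∀ i, ((A.map Complex.ofReal) *ᵥ (WithLp.equiv 2 _ xc)) i
      = ((A *ᵥ (WithLp.equiv 2 _ x)) i : ℂ) := fun i => by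
    simp [Matrix.mulVec, dotProduct, xc]
  have key : ‖((toEuclideanLin ≪≫ₗ LinearMap.toContinuousLinearMap) A) x‖
      = ‖((toEuclideanLin ≪≫ₗ LinearMap.toContinuousLinearMap) (A.map Complex.ofReal)) xc‖ := by
    change ‖(WithLp.equiv 2 (Fin d → ℝ)).symm (A *ᵥ (WithLp.equiv 2 _ x))‖
      = ‖(WithLp.equiv 2 (Fin d → ℂ)).symm ((A.map Complex.ofReal) *ᵥ (WithLp.equiv 2 _ xc))‖
    rw [EuclideanSpace.norm_eq, EuclideanSpace.norm_eq]
    congr 1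
    refine Finset.sum_congr rfl fun i _ => ?_
    simp only [WithLp.equiv_symm_apply, WithLp.ofLp_toLp]
    rw [happ i]
    simp
  rw [key, ← hnx]
  exact ContinuousLinearMap.le_opNorm _ _

lemma schur_pow_bound {d : ℕ} (hd : 0 < d) (A : Matrix (Fin d) (Fin d) ℝ) (hA : IsSchur A) :
    ∃ r : ℝ≥0, (r : ℝ) < 1 ∧ ∀ᶠ t in atTop, ‖(A.map Complex.ofReal) ^ t‖ ≤ (r : ℝ) ^ t := by
  haveI : Nonempty (Fin d) := Fin.pos_iff_nonempty.mp hd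
  haveI : Nontrivial (Matrix (Fin d) (Fin d) ℂ) :=
    inferInstanceAs (Nontrivial (Fin d → Fin d → ℂ))
  set M := A.map Complex.ofReal with hM
  have hρ : spectralRadius ℂ M < 1 := by
    have := spectrum.spectralRadius_lt_of_forall_lt (a := M) (r := 1)
      (fun z hz => by
        simpa using NNReal.coe_lt_coe.mp (show ((‖z‖₊ : ℝ≥0) : ℝ) < ((1 : ℝ≥0) : ℝ) by simpa using hA z hz))
    simpa using this
  obtain ⟨r, hρr, hr1⟩ := ENNReal.lt_iff_exists_nnreal_btwn.mp hρ
  refine ⟨r, by exact_mod_cast hr1, ?_⟩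
  have hG := spectrum.pow_nnnorm_pow_one_div_tendsto_nhds_spectralRadius M
  have hev : ∀ᶠ n : ℕ in atTop, (‖M ^ n‖₊ : ℝ≥0∞) ^ (1 / (n : ℕ) : ℝ) < (r : ℝ≥0∞) :=
    hG.eventually_lt_const hρr
  filter_upwards [hev, eventually_ge_atTop 1] with n hn hn1
  have hn0 : (n : ℝ) ≠ 0 := Nat.cast_ne_zero.mpr (by omega)
  have h2 : ((‖M ^ n‖₊ : ℝ≥0∞) ^ (1 / (n : ℝ))) ^ (n : ℝ) < (r : ℝ≥0∞) ^ (n : ℝ) :=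
    ENNReal.rpow_lt_rpow hn (by positivity)
  rw [← ENNReal.rpow_mul, one_div_mul_cancel hn0, ENNReal.rpow_one,
    ENNReal.rpow_natCast, ← ENNReal.coe_pow, ENNReal.coe_lt_coe] at h2
  have h3 := (NNReal.coe_lt_coe.mpr h2).le
  simpa [coe_nnnorm] using h3

lemma specNorm_transpose {d : ℕ} (A : Matrix (Fin d) (Fin d) ℝ) :
    specNorm Aᵀ = specNorm A := by
  rw [specNorm_eq_l2, specNorm_eq_l2, ← conjT_eq_transpose, Matrix.l2_opNorm_conjTranspose]

lemma summable_schur_conj_aux {d : ℕ} (Θ : Matrix (Fin d) (Fin d) ℝ) (hΘ : IsSchur Θ)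
    (X : Matrix (Fin d) (Fin d) ℝ) :
    Summable (fun t : ℕ => Θ ^ t * X * (Θᵀ) ^ t) := by
  rcases Nat.eq_zero_or_pos d with rfl | hd
  · haveI : Subsingleton (Matrix (Fin 0) (Fin 0) ℝ) :=
      ⟨fun a b => Matrix.ext fun i _ => i.elim0⟩
    have : (fun t : ℕ => Θ ^ t * X * (Θᵀ) ^ t) = fun _ => (0 : Matrix (Fin 0) (Fin 0) ℝ) :=
      funext fun _ => Subsingleton.elim _ _
    rw [this]
    exact summable_zero
  · obtain ⟨r, hr1, hev⟩ := schur_pow_bound hd Θ hΘ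
    have hr0 : (0 : ℝ) ≤ r := r.coe_nonneg
    apply Summable.of_norm_bounded_eventually_nat (g := fun t => ‖X‖ * ((r : ℝ) * r) ^ t)
    · exact (summable_geometric_of_lt_one (by positivity) (by nlinarith)).mul_left _
    · have hpow : ∀ᶠ t in atTop, ‖Θ ^ t‖ ≤ (r : ℝ) ^ t := by
        filter_upwards [hev] with t ht
        have hmap : (Θ ^ t).map Complex.ofReal = (Θ.map Complex.ofReal) ^ t := by
          have := map_pow (Complex.ofRealHom.mapMatrix) Θ t
          simpa [RingHom.mapMatrix_apply, show (⇑Complex.ofRealHom) = Complex.ofReal from rfl] using this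
        calc ‖Θ ^ t‖ = specNorm (Θ ^ t) := (specNorm_eq_l2 _).symm
          _ ≤ ‖(Θ ^ t).map Complex.ofReal‖ := specNorm_le_complex _
          _ = ‖(Θ.map Complex.ofReal) ^ t‖ := by rw [hmap]
          _ ≤ (r : ℝ) ^ t := ht
      filter_upwards [hpow] with t ht
      have htr : ‖(Θᵀ) ^ t‖ = ‖Θ ^ t‖ := by
        rw [← Matrix.transpose_pow, ← specNorm_eq_l2, specNorm_transpose, specNorm_eq_l2]
      have hc1 : ‖Θ ^ t * X * (Θᵀ) ^ t‖ ≤ ‖Θ ^ t‖ * ‖X‖ * ‖(Θᵀ) ^ t‖ := by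
        calc ‖Θ ^ t * X * (Θᵀ) ^ t‖ ≤ ‖Θ ^ t * X‖ * ‖(Θᵀ) ^ t‖ := Matrix.l2_opNorm_mul _ _
          _ ≤ ‖Θ ^ t‖ * ‖X‖ * ‖(Θᵀ) ^ t‖ :=
              mul_le_mul_of_nonneg_right (Matrix.l2_opNorm_mul _ _) (norm_nonneg _)
      rw [htr] at hc1
      calc ‖Θ ^ t * X * (Θᵀ) ^ t‖ ≤ ‖Θ ^ t‖ * ‖X‖ * ‖Θ ^ t‖ := hc1
        _ ≤ (r : ℝ) ^ t * ‖X‖ * (r : ℝ) ^ t := by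
            have h0 : (0:ℝ) ≤ ‖Θ ^ t‖ := norm_nonneg _
            have h1 : (0:ℝ) ≤ ‖X‖ := norm_nonneg _
            nlinarith [mul_le_mul ht ht h0 (pow_nonneg hr0 t), h1,
              mul_le_mul_of_nonneg_left (mul_le_mul ht ht h0 (pow_nonneg hr0 t)) h1]
        _ = ‖X‖ * ((r : ℝ) * r) ^ t := by rw [mul_pow]; ring

end AuxScoped

/-- Unscoped wrapper. -/
lemma summable_schur_conj {d : ℕ} (Θ : Matrix (Fin d) (Fin d) ℝ) (hΘ : IsSchur Θ)
    (X : Matrix (Fin d) (Fin d) ℝ) :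
    Summable (fun t : ℕ => Θ ^ t * X * (Θᵀ) ^ t) :=
  summable_schur_conj_aux Θ hΘ X

section TsumPSD

/-- The quadratic form commutes with `tsum`. -/
lemma quad_tsum {d : ℕ} {f : ℕ → Matrix (Fin d) (Fin d) ℝ} (hf : Summable f)
    (x : Fin d → ℝ) :
    x ⬝ᵥ ((∑' t, f t) *ᵥ x) = ∑' t, x ⬝ᵥ ((f t) *ᵥ x) := by
  let φ : Matrix (Fin d) (Fin d) ℝ →ₗ[ℝ] ℝ :=
    { toFun := fun A => x ⬝ᵥ (A *ᵥ x)
      map_add' := fun A B => by simp [Matrix.add_mulVec, dotProduct_add]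
      map_smul' := fun c A => by simp [Matrix.smul_mulVec, dotProduct_smul] }
  have hcont : Continuous φ := φ.continuous_of_finiteDimensional
  have := (hf.hasSum.map φ hcont).tsum_eq
  simpa [φ, Function.comp] using this.symm

lemma posSemidef_smul {d : ℕ} {A : Matrix (Fin d) (Fin d) ℝ} (hA : A.PosSemidef)
    {c : ℝ} (hc : 0 ≤ c) : (c • A).PosSemidef := by
  refine Matrix.PosSemidef.of_dotProduct_mulVec_nonneg ?_ ?_
  · have := hA.1
    rw [Matrix.IsHermitian] at this ⊢
    rw [Matrix.conjTranspose_smul, this]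
    congr 1
  · intro x
    have := hA.dotProduct_mulVec_nonneg x
    simp only [Matrix.smul_mulVec, dotProduct_smul, smul_eq_mul]
    exact mul_nonneg hc this

lemma posSemidef_tsum {d : ℕ} {f : ℕ → Matrix (Fin d) (Fin d) ℝ} (hf : Summable f)
    (h : ∀ t, (f t).PosSemidef) : (∑' t, f t).PosSemidef := by
  refine Matrix.PosSemidef.of_dotProduct_mulVec_nonneg ?_ ?_
  · rw [Matrix.IsHermitian, Matrix.conjTranspose_tsum]
    exact tsum_congr fun t => (h t).1
  · intro x
    have hsx : star x = x := by simp
    rw [hsx, quad_tsum hf]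
    exact tsum_nonneg fun t => by simpa [hsx] using (h t).dotProduct_mulVec_nonneg x

end TsumPSD

/-- Let Θ̂ be Schur stable, Φ̂ ⪰ σI ≻ 0, and
V̂ = Σ_t Θ̂ᵗ Φ̂ (Θ̂ᵀ)ᵗ.  Then the Lyapunov operator T(X) = Σ_t Θ̂ᵗ X (Θ̂ᵀ)ᵗ on
symmetric matrices satisfies ‖T(X)‖ ≤ (‖V̂‖/σ)‖X‖ (in particular for
σ = σ_min(Φ̂)), and the defining series converges. -/
theorem lyapunov_operator_norm_bound {d : ℕ}
    (Θ Φ V : Matrix (Fin d) (Fin d) ℝ) (σ : ℝ)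
    (hΘ : IsSchur Θ) (hΦ : Φ.PosDef)
    (hσ : 0 < σ)
    (hσΦ : (Φ - σ • (1 : Matrix (Fin d) (Fin d) ℝ)).PosSemidef)
    (hV : V = ∑' t : ℕ, Θ ^ t * Φ * (Θᵀ) ^ t) :
    ∀ X : Matrix (Fin d) (Fin d) ℝ, Xᵀ = X →
      Summable (fun t : ℕ => Θ ^ t * X * (Θᵀ) ^ t) ∧
      specNorm (∑' t : ℕ, Θ ^ t * X * (Θᵀ) ^ t) ≤ specNorm V / σ * specNorm X := by
  intro X hX
  have hS : Summable (fun t : ℕ => Θ ^ t * X * (Θᵀ) ^ t) := summable_schur_conj Θ hΘ X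
  have hSΦ : Summable (fun t : ℕ => Θ ^ t * Φ * (Θᵀ) ^ t) := summable_schur_conj Θ hΘ Φ
  refine ⟨hS, ?_⟩
  set S : Matrix (Fin d) (Fin d) ℝ := ∑' t : ℕ, Θ ^ t * X * (Θᵀ) ^ t with hSdef
  set c : ℝ := specNorm X / σ with hc
  have hc0 : 0 ≤ c := div_nonneg (specNorm_nonneg X) hσ.le
  -- the two one-sided bounds at the level of `X`
  have hXP : (specNorm X • (1 : Matrix (Fin d) (Fin d) ℝ) - X).PosSemidef := by
    refine Matrix.PosSemidef.of_dotProduct_mulVec_nonneg ?_ ?_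
    · rw [Matrix.IsHermitian, Matrix.conjTranspose_sub, Matrix.conjTranspose_smul,
        Matrix.conjTranspose_one, conjT_eq_transpose, hX]
      congr 1
    · intro x
      have habs := abs_dot_le X x
      have hsx : star x = x := by simp
      rw [hsx, Matrix.sub_mulVec, dotProduct_sub, Matrix.smul_mulVec,
        dotProduct_smul, Matrix.one_mulVec]
      have := (abs_le.mp habs).2
      simp only [smul_eq_mul]
      linarith
  have hXM : (specNorm X • (1 : Matrix (Fin d) (Fin d) ℝ) + X).PosSemidef := by
    refine Matrix.PosSemidef.of_dotProduct_mulVec_nonneg ?_ ?_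
    · rw [Matrix.IsHermitian, Matrix.conjTranspose_add, Matrix.conjTranspose_smul,
        Matrix.conjTranspose_one, conjT_eq_transpose, hX]
      congr 1
    · intro x
      have habs := abs_dot_le X x
      have hsx : star x = x := by simp
      rw [hsx, Matrix.add_mulVec, dotProduct_add, Matrix.smul_mulVec,
        dotProduct_smul, Matrix.one_mulVec]
      have := (abs_le.mp habs).1
      simp only [smul_eq_mul]
      linarith
  -- sandwich by `c • Φ`
  have hsmul : (c • (Φ - σ • (1 : Matrix (Fin d) (Fin d) ℝ))).PosSemidef :=
    posSemidef_smul hσΦ hc0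
  have hcσ : c * σ = specNorm X := div_mul_cancel₀ _ hσ.ne'
  have hPhiP : (c • Φ - X).PosSemidef := by
    have e : c • Φ - X = c • (Φ - σ • (1 : Matrix (Fin d) (Fin d) ℝ))
        + (specNorm X • (1 : Matrix (Fin d) (Fin d) ℝ) - X) := by
      rw [smul_sub, smul_smul, hcσ]
      abel
    rw [e]
    exact hsmul.add hXP
  have hPhiM : (c • Φ + X).PosSemidef := by
    have e : c • Φ + X = c • (Φ - σ • (1 : Matrix (Fin d) (Fin d) ℝ))
        + (specNorm X • (1 : Matrix (Fin d) (Fin d) ℝ) + X) := by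
      rw [smul_sub, smul_smul, hcσ]
      abel
    rw [e]
    exact hsmul.add hXM
  -- conjugate each term
  have hconj : ∀ (P : Matrix (Fin d) (Fin d) ℝ), P.PosSemidef →
      ∀ t : ℕ, (Θ ^ t * P * (Θᵀ) ^ t).PosSemidef := by
    intro P hP t
    have := hP.mul_mul_conjTranspose_same (Θ ^ t)
    rwa [conjT_eq_transpose, Matrix.transpose_pow] at this
  have hgeqP : ∀ t : ℕ, Θ ^ t * (c • Φ - X) * (Θᵀ) ^ t
      = c • (Θ ^ t * Φ * (Θᵀ) ^ t) - Θ ^ t * X * (Θᵀ) ^ t := by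
    intro t
    rw [Matrix.mul_sub, Matrix.sub_mul, Matrix.mul_smul, Matrix.smul_mul]
  have hgeqM : ∀ t : ℕ, Θ ^ t * (c • Φ + X) * (Θᵀ) ^ t
      = c • (Θ ^ t * Φ * (Θᵀ) ^ t) + Θ ^ t * X * (Θᵀ) ^ t := by
    intro t
    rw [Matrix.mul_add, Matrix.add_mul, Matrix.mul_smul, Matrix.smul_mul]
  have hsumP : Summable (fun t : ℕ =>
      c • (Θ ^ t * Φ * (Θᵀ) ^ t) - Θ ^ t * X * (Θᵀ) ^ t) :=
    (hSΦ.const_smul c).sub hS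
  have hsumM : Summable (fun t : ℕ =>
      c • (Θ ^ t * Φ * (Θᵀ) ^ t) + Θ ^ t * X * (Θᵀ) ^ t) :=
    (hSΦ.const_smul c).add hS
  have htsumP : (∑' t : ℕ, (c • (Θ ^ t * Φ * (Θᵀ) ^ t) - Θ ^ t * X * (Θᵀ) ^ t))
      = c • V - S := by
    rw [Summable.tsum_sub (hSΦ.const_smul c) hS, Summable.tsum_const_smul c hSΦ, hV]
  have htsumM : (∑' t : ℕ, (c • (Θ ^ t * Φ * (Θᵀ) ^ t) + Θ ^ t * X * (Θᵀ) ^ t))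
      = c • V + S := by
    rw [Summable.tsum_add (hSΦ.const_smul c) hS, Summable.tsum_const_smul c hSΦ, hV]
  have hPSD1 : (c • V - S).PosSemidef := by
    rw [← htsumP]
    exact posSemidef_tsum hsumP fun t => (hgeqP t) ▸ hconj _ hPhiP t
  have hPSD2 : (c • V + S).PosSemidef := by
    rw [← htsumM]
    exact posSemidef_tsum hsumM fun t => (hgeqM t) ▸ hconj _ hPhiM t
  -- symmetric S
  have hSsym : Sᵀ = S := by
    rw [hSdef, Matrix.transpose_tsum]
    refine tsum_congr fun t => ?_
    rw [Matrix.transpose_mul, Matrix.transpose_mul, Matrix.transpose_pow,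
      Matrix.transpose_pow, Matrix.transpose_transpose, hX, Matrix.mul_assoc]
  -- quadratic bound
  have hquad : ∀ v : EuclideanSpace ℝ (Fin d),
      |inner ℝ v (mCLM S v)| ≤ (c * specNorm V) * ‖v‖ ^ 2 := by
    intro v
    set x : Fin d → ℝ := WithLp.equiv 2 _ v with hxv
    have hq1 : x ⬝ᵥ ((c • V - S) *ᵥ x) = c * (x ⬝ᵥ (V *ᵥ x)) - x ⬝ᵥ (S *ᵥ x) := by
      rw [Matrix.sub_mulVec, dotProduct_sub, Matrix.smul_mulVec, dotProduct_smul]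
      rfl
    have hq2 : x ⬝ᵥ ((c • V + S) *ᵥ x) = c * (x ⬝ᵥ (V *ᵥ x)) + x ⬝ᵥ (S *ᵥ x) := by
      rw [Matrix.add_mulVec, dotProduct_add, Matrix.smul_mulVec, dotProduct_smul]
      rfl
    have hp1 := hPSD1.dotProduct_mulVec_nonneg x
    have hp2 := hPSD2.dotProduct_mulVec_nonneg x
    have hsx : star x = x := by simp
    rw [hsx, hq1] at hp1
    rw [hsx, hq2] at hp2
    have hVb : x ⬝ᵥ (V *ᵥ x) ≤ specNorm V * (x ⬝ᵥ x) := (abs_le.mp (abs_dot_le V x)).2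
    have hiq : inner ℝ v (mCLM S v) = x ⬝ᵥ (S *ᵥ x) := inner_mCLM S v v
    have hnq : ‖v‖ ^ 2 = x ⬝ᵥ x := norm_sq_eq_dot v
    rw [hiq, hnq]
    rw [abs_le]
    constructor
    · nlinarith [mul_le_mul_of_nonneg_left hVb hc0]
    · nlinarith [mul_le_mul_of_nonneg_left hVb hc0]
  -- conclude
  have hfinal : specNorm S ≤ c * specNorm V := by
    rw [specNorm_eq_norm_mCLM]
    exact aux_opNorm_le (mCLM S) (mul_nonneg hc0 (specNorm_nonneg V))
      (mCLM_symm hSsym) hquad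
  calc specNorm S ≤ c * specNorm V := hfinal
    _ = specNorm V / σ * specNorm X := by rw [hc]; ring
end

section
/- Let Θ̂ ∈ ℝ^{d×d} be Schur stable with spectral radius ρ(Θ̂), Φ̂ ≻ 0, and V̂ = Σ_{t=0}^∞ Θ̂ᵗ Φ̂ (Θ̂ᵀ)ᵗ. Then tr(V̂) ≥ σ_min(Φ̂) / (2(1 − ρ(Θ̂))). -/
open Matrix

/-- The spectral radius of a real square matrix: the largest modulus of a
(complex) spectral value. -/
noncomputable def sprad {d : ℕ} (A : Matrix (Fin d) (Fin d) ℝ) : ℝ :=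
  sSup ((fun z : ℂ => ‖z‖) '' spectrum ℂ (A.map Complex.ofReal))

private lemma psd_trace_nonneg {d : ℕ} {M : Matrix (Fin d) (Fin d) ℝ}
    (hM : M.PosSemidef) : 0 ≤ M.trace := by
  rw [Matrix.trace]
  refine Finset.sum_nonneg fun i _ => ?_
  exact hM.diag_nonneg

/-- Let Θ̂ ∈ ℝ^{d×d} (d ≥ 1) be Schur stable with spectral radius
ρ(Θ̂) < 1, Φ̂ ⪰ σI ≻ 0, and V̂ = Σ_t Θ̂ᵗ Φ̂ (Θ̂ᵀ)ᵗ.  Then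
tr(V̂) ≥ σ / (2(1 − ρ(Θ̂))) (in particular for σ = σ_min(Φ̂)). -/
theorem trace_gramian_lower_bound {d : ℕ} (hd : 0 < d)
    (Θ Φ V : Matrix (Fin d) (Fin d) ℝ) (σ : ℝ)
    (hΘ : sprad Θ < 1) (hΦ : Φ.PosDef)
    (hσ : 0 < σ)
    (hσΦ : (Φ - σ • (1 : Matrix (Fin d) (Fin d) ℝ)).PosSemidef)
    (hsum : Summable fun t : ℕ => Θ ^ t * Φ * (Θᵀ) ^ t)
    (hV : V = ∑' t : ℕ, Θ ^ t * Φ * (Θᵀ) ^ t) :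
    σ / (2 * (1 - sprad Θ)) ≤ V.trace := by
  classical
  set ρ := sprad Θ with hρdef
  set A : Matrix (Fin d) (Fin d) ℂ := Θ.map Complex.ofReal with hAdef
  haveI : Nonempty (Fin d) := ⟨⟨0, hd⟩⟩
  have hne : (spectrum ℂ A).Nonempty :=
    spectrum.nonempty_of_isAlgClosed_of_finiteDimensional ℂ A
  have hmem : ρ ∈ (fun z : ℂ => ‖z‖) '' spectrum ℂ A :=
    (hne.image _).csSup_mem ((A.finite_spectrum).image _)
  obtain ⟨z, hzmem, hznorm⟩ := hmem
  have hρ0 : 0 ≤ ρ := hznorm ▸ norm_nonneg z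
  -- eigenvector for z
  have hnu : ¬ IsUnit (algebraMap ℂ (Matrix (Fin d) (Fin d) ℂ) z - A) :=
    (spectrum.mem_iff).mp hzmem
  have hdet : (algebraMap ℂ (Matrix (Fin d) (Fin d) ℂ) z - A).det = 0 := by
    by_contra h
    exact hnu ((Matrix.isUnit_iff_isUnit_det _).mpr (isUnit_iff_ne_zero.mpr h))
  obtain ⟨v, hv0, hveq⟩ := Matrix.exists_mulVec_eq_zero_iff.mpr hdet
  have hAv : A.mulVec v = z • v := by
    rw [Matrix.sub_mulVec] at hveq
    have h1 : (algebraMap ℂ (Matrix (Fin d) (Fin d) ℂ) z).mulVec v = z • v := by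
      rw [Algebra.algebraMap_eq_smul_one, Matrix.smul_mulVec, Matrix.one_mulVec]
    rw [h1] at hveq
    linear_combination (norm := module) -hveq
  have hpow : ∀ t : ℕ, (A ^ t).mulVec v = z ^ t • v := by
    intro t
    induction t with
    | zero => simp [Matrix.one_mulVec]
    | succ n ih =>
        rw [pow_succ', ← Matrix.mulVec_mulVec, ih, Matrix.mulVec_smul, hAv,
          smul_smul, ← pow_succ]
  have hmap : ∀ t : ℕ, A ^ t = (Θ ^ t).map Complex.ofReal := by
    intro t
    have h := map_pow (Complex.ofRealHom.mapMatrix) Θ t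
    simp only [RingHom.mapMatrix_apply] at h
    exact h.symm
  set s : ℝ := ∑ j, ‖v j‖ ^ 2 with hsdef
  have hs : 0 < s := by
    obtain ⟨j, hj⟩ := Function.ne_iff.mp hv0
    refine Finset.sum_pos' (fun i _ => by positivity) ⟨j, Finset.mem_univ j, pow_pos (norm_pos_iff.mpr hj) 2⟩
  set F : ℕ → ℝ := fun t => ∑ i, ∑ j, (Θ ^ t) i j ^ 2 with hFdef
  have key : ∀ t : ℕ, (ρ ^ 2) ^ t ≤ F t := by
    intro t
    have hnorme : ∀ i j, ‖(A ^ t) i j‖ = |(Θ ^ t) i j| := by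
      intro i j
      rw [hmap t]
      simp [Matrix.map_apply, Complex.norm_real]
    have hrow : ∀ i, ((A ^ t).mulVec v) i = ∑ j, (A ^ t) i j * v j := fun i => rfl
    have hCS : ∀ i, ‖((A ^ t).mulVec v) i‖ ^ 2 ≤ (∑ j, ‖(A ^ t) i j‖ ^ 2) * s := by
      intro i
      rw [hrow i]
      have h3 : ‖∑ j, (A ^ t) i j * v j‖ ≤ ∑ j, ‖(A ^ t) i j‖ * ‖v j‖ := by
        refine (norm_sum_le _ _).trans ?_
        exact Finset.sum_le_sum fun j _ => by rw [norm_mul]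
      calc ‖∑ j, (A ^ t) i j * v j‖ ^ 2
          ≤ (∑ j, ‖(A ^ t) i j‖ * ‖v j‖) ^ 2 := by
            have := pow_le_pow_left₀ (norm_nonneg _) h3 2
            exact this
        _ ≤ (∑ j, ‖(A ^ t) i j‖ ^ 2) * (∑ j, ‖v j‖ ^ 2) :=
            Finset.sum_mul_sq_le_sq_mul_sq _ _ _
    have hsumrows : ∑ i, ‖((A ^ t).mulVec v) i‖ ^ 2 = (ρ ^ 2) ^ t * s := by
      rw [hpow t]
      have : ∀ i, ‖(z ^ t • v) i‖ ^ 2 = (ρ ^ 2) ^ t * ‖v i‖ ^ 2 := by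
        intro i
        simp only [Pi.smul_apply, smul_eq_mul, norm_mul, norm_pow, mul_pow, hznorm]
        ring
      rw [Finset.sum_congr rfl fun i _ => this i, ← Finset.mul_sum]
    have hub : ∑ i, ‖((A ^ t).mulVec v) i‖ ^ 2 ≤ F t * s := by
      calc ∑ i, ‖((A ^ t).mulVec v) i‖ ^ 2
          ≤ ∑ i, (∑ j, ‖(A ^ t) i j‖ ^ 2) * s := Finset.sum_le_sum fun i _ => hCS i
        _ = F t * s := by
            rw [← Finset.sum_mul]
            congr 1
            refine Finset.sum_congr rfl fun i _ => Finset.sum_congr rfl fun j _ => ?_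
            rw [hnorme i j, sq_abs]
    have := hsumrows ▸ hub
    exact le_of_mul_le_mul_right this hs
  -- trace of each term
  have hFt : ∀ t : ℕ, (Θ ^ t * (Θᵀ) ^ t).trace = F t := by
    intro t
    simp only [hFdef, Matrix.trace, Matrix.diag, Matrix.mul_apply, ← Matrix.transpose_pow,
      Matrix.transpose_apply, sq]
  have htr : ∀ t : ℕ, σ * (ρ ^ 2) ^ t ≤ (Θ ^ t * Φ * (Θᵀ) ^ t).trace := by
    intro t
    have hdecomp : Θ ^ t * Φ * (Θᵀ) ^ t
        = σ • (Θ ^ t * (Θᵀ) ^ t) + Θ ^ t * (Φ - σ • 1) * (Θᵀ) ^ t := by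
      rw [Matrix.mul_sub, Matrix.sub_mul, mul_smul_comm, smul_mul_assoc, mul_one]
      abel
    have hpsd : (Θ ^ t * (Φ - σ • 1) * (Θᵀ) ^ t).PosSemidef := by
      have h := hσΦ.mul_mul_conjTranspose_same (Θ ^ t)
      rwa [Matrix.conjTranspose_eq_transpose_of_trivial, Matrix.transpose_pow] at h
    have h1 : 0 ≤ (Θ ^ t * (Φ - σ • 1) * (Θᵀ) ^ t).trace := psd_trace_nonneg hpsd
    rw [hdecomp, Matrix.trace_add, Matrix.trace_smul, smul_eq_mul, hFt t]
    have h2 : σ * (ρ ^ 2) ^ t ≤ σ * F t :=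
      mul_le_mul_of_nonneg_left (key t) hσ.le
    linarith
  -- trace of the tsum
  let L : Matrix (Fin d) (Fin d) ℝ →L[ℝ] ℝ :=
    LinearMap.toContinuousLinearMap (Matrix.traceLinearMap (Fin d) ℝ ℝ)
  have hL : ∀ M : Matrix (Fin d) (Fin d) ℝ, L M = M.trace := fun M => rfl
  have htrace : V.trace = ∑' t : ℕ, (Θ ^ t * Φ * (Θᵀ) ^ t).trace := by
    rw [hV, ← hL]
    rw [L.map_tsum hsum]
    rfl
  have hsum1 : Summable fun t : ℕ => (Θ ^ t * Φ * (Θᵀ) ^ t).trace := by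
    have := hsum.map L L.continuous
    exact this
  have hρ2 : ρ ^ 2 < 1 := by nlinarith
  have hρ2' : (0:ℝ) ≤ ρ ^ 2 := by positivity
  have hsumg : Summable fun t : ℕ => σ * (ρ ^ 2) ^ t :=
    (summable_geometric_of_lt_one hρ2' hρ2).mul_left σ
  have hmain : (∑' t : ℕ, σ * (ρ ^ 2) ^ t) ≤ ∑' t : ℕ, (Θ ^ t * Φ * (Θᵀ) ^ t).trace :=
    Summable.tsum_le_tsum (fun t => htr t) hsumg hsum1
  rw [tsum_mul_left, tsum_geometric_of_lt_one hρ2' hρ2] at hmain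
  rw [htrace]
  refine le_trans ?_ hmain
  rw [← div_eq_mul_inv]
  have h2ρ : (0:ℝ) < 1 - ρ ^ 2 := by linarith
  have hle : 1 - ρ ^ 2 ≤ 2 * (1 - ρ) := by nlinarith
  exact div_le_div_of_nonneg_left hσ.le h2ρ hle
end

section
/- Let Θ, Π be matrices, K and K* feedback gains such that Θ + ΠK and Θ + ΠK* generate convergent closed-loop trajectories from v(L), with Ψ_K ⪰ 0 satisfying the value identity C_K(v) = vᵀΨ_K v for closed-loop cost. Define E_K = (R + ΠᵀΨ_KΠ)K + ΠᵀΨ_KΘ and V_{K*} = E[Σ_{t≥L} v*(t) v*(t)ᵀ] where v*(t) = (Θ+ΠK*)^{t−L} v(L). Then the cost gap satisfies J(K) − J(K*) ≤ tr( V_{K*} E_Kᵀ (R + ΠᵀΨ_KΠ)^{−1} E_K ). -/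
open Matrix MeasureTheory Filter

/-- Cost-difference bound.  With Θ_K = Θ + ΠK and Θ_{K*} = Θ + ΠK*
generating convergent closed-loop trajectories from v(L), Ψ_K, Ψ_{K*} ⪰ 0 the
value matrices (solutions of the closed-loop Stein equations, so that the
closed-loop cost is C_K(v) = vᵀΨ_K v), E_K = (R + ΠᵀΨ_KΠ)K + ΠᵀΨ_KΘ and
V_{K*} = E[Σ_{t≥L} v*(t)v*(t)ᵀ] for v*(t) = (Θ+ΠK*)^{t−L} v(L), the cost gap
satisfies J(K) − J(K*) ≤ tr(V_{K*} E_Kᵀ (R + ΠᵀΨ_KΠ)⁻¹ E_K). -/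
theorem cost_difference_bound {N m : ℕ}
    (Θ : Matrix (Fin N) (Fin N) ℝ) (Pm : Matrix (Fin N) (Fin m) ℝ)
    (Qc : Matrix (Fin N) (Fin N) ℝ) (R : Matrix (Fin m) (Fin m) ℝ)
    (K Ks : Matrix (Fin m) (Fin N) ℝ)
    (ΨK Ψs : Matrix (Fin N) (Fin N) ℝ)
    (hQc : Qc.PosSemidef) (hR : R.PosDef)
    (hΨK : ΨK.PosSemidef) (hΨs : Ψs.PosSemidef)
    (hSteinK : (Θ + Pm * K)ᵀ * ΨK * (Θ + Pm * K) - ΨK = -(Qc + Kᵀ * R * K))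
    (hSteins : (Θ + Pm * Ks)ᵀ * Ψs * (Θ + Pm * Ks) - Ψs = -(Qc + Ksᵀ * R * Ks))
    {Ω : Type*} [MeasurableSpace Ω] (μ : Measure Ω) [IsProbabilityMeasure μ]
    (v0 : Ω → Fin N → ℝ)
    (hconvK : ∀ ω, Tendsto (fun t : ℕ => ((Θ + Pm * K) ^ t).mulVec (v0 ω)) atTop (nhds 0))
    (hconvs : ∀ ω, Tendsto (fun t : ℕ => ((Θ + Pm * Ks) ^ t).mulVec (v0 ω)) atTop (nhds 0))
    (hSum : ∀ ω, ∀ i j : Fin N, Summable fun t : ℕ =>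
      ((Θ + Pm * Ks) ^ t).mulVec (v0 ω) i * ((Θ + Pm * Ks) ^ t).mulVec (v0 ω) j)
    (hIntV : ∀ i j : Fin N, Integrable (fun ω => ∑' t : ℕ,
      ((Θ + Pm * Ks) ^ t).mulVec (v0 ω) i * ((Θ + Pm * Ks) ^ t).mulVec (v0 ω) j) μ)
    (hIntK : Integrable (fun ω => v0 ω ⬝ᵥ ΨK.mulVec (v0 ω)) μ)
    (hInts : Integrable (fun ω => v0 ω ⬝ᵥ Ψs.mulVec (v0 ω)) μ)
    (Vs : Matrix (Fin N) (Fin N) ℝ)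
    (hVs : ∀ i j, Vs i j = ∫ ω, ∑' t : ℕ,
      ((Θ + Pm * Ks) ^ t).mulVec (v0 ω) i * ((Θ + Pm * Ks) ^ t).mulVec (v0 ω) j ∂μ)
    (EK : Matrix (Fin m) (Fin N) ℝ)
    (hEK : EK = (R + Pmᵀ * ΨK * Pm) * K + Pmᵀ * ΨK * Θ) :
    (∫ ω, v0 ω ⬝ᵥ ΨK.mulVec (v0 ω) ∂μ) - (∫ ω, v0 ω ⬝ᵥ Ψs.mulVec (v0 ω) ∂μ)
      ≤ (Vs * EKᵀ * (R + Pmᵀ * ΨK * Pm)⁻¹ * EK).trace := by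
  -- symmetry facts
  have hRT : Rᵀ = R := by
    have := hR.isHermitian.eq
    rwa [Matrix.conjTranspose_eq_transpose_of_trivial] at this
  have hΨKT : ΨKᵀ = ΨK := by
    have := hΨK.isHermitian.eq
    rwa [Matrix.conjTranspose_eq_transpose_of_trivial] at this
  set G := R + Pmᵀ * ΨK * Pm with hGdef
  have hGpsd' : (Pmᵀ * ΨK * Pm).PosSemidef := by
    have := hΨK.conjTranspose_mul_mul_same Pm
    rwa [Matrix.conjTranspose_eq_transpose_of_trivial] at this
  have hG : G.PosDef := hR.add_posSemidef hGpsd'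
  have hGT : Gᵀ = G := by
    have := hG.isHermitian.eq
    rwa [Matrix.conjTranspose_eq_transpose_of_trivial] at this
  have hGu : IsUnit G.det := isUnit_iff_ne_zero.mpr hG.det_pos.ne'
  have h1 : G * G⁻¹ = 1 := Matrix.mul_nonsing_inv G hGu
  have h2 : G⁻¹ * G = 1 := Matrix.nonsing_inv_mul G hGu
  have hGi : G⁻¹.PosDef := hG.inv
  have hGiT : (G⁻¹)ᵀ = G⁻¹ := by
    have := hGi.isHermitian.eq
    rwa [Matrix.conjTranspose_eq_transpose_of_trivial] at this
  set M := EKᵀ * G⁻¹ * EK with hMdef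
  have hMT : Mᵀ = M := by
    rw [hMdef]
    simp [Matrix.transpose_mul, Matrix.transpose_transpose, hGiT, Matrix.mul_assoc]
  have hM : M.PosSemidef := by
    have := hGi.posSemidef.conjTranspose_mul_mul_same EK
    rwa [Matrix.conjTranspose_eq_transpose_of_trivial] at this
  set D := Ks - K with hDdef
  set Θs := Θ + Pm * Ks with hΘsdef
  set S0 := Dᵀ * G * D + Dᵀ * EK + EKᵀ * D with hS0def
  -- advantage identity
  have keyA : Qc + Ksᵀ * R * Ks + Θsᵀ * ΨK * Θs - ΨK = S0 := by
    have hexp : Qc + Ksᵀ * R * Ks + Θsᵀ * ΨK * Θs - ΨK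
        = ((Θ + Pm * K)ᵀ * ΨK * (Θ + Pm * K) - ΨK + (Qc + Kᵀ * R * K)) + S0 := by
      rw [hS0def, hΘsdef, hDdef, hEK, hGdef]
      simp only [Matrix.transpose_add, Matrix.transpose_mul, Matrix.transpose_sub,
        Matrix.transpose_transpose, hRT, hΨKT, Matrix.add_mul, Matrix.mul_add,
        Matrix.sub_mul, Matrix.mul_sub]
      simp only [Matrix.mul_assoc]
      noncomm_ring
    rw [hexp, hSteinK]
    abel
  -- PSD of S0 + M
  have hid : (G * D + EK)ᵀ * G⁻¹ * (G * D + EK) = S0 + M := by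
    rw [hS0def, hMdef]
    calc (G * D + EK)ᵀ * G⁻¹ * (G * D + EK)
        = Dᵀ * ((G * G⁻¹) * G) * D + Dᵀ * (G * G⁻¹) * EK
          + EKᵀ * (G⁻¹ * G) * D + EKᵀ * G⁻¹ * EK := by
          simp only [Matrix.transpose_add, Matrix.transpose_mul, hGT, Matrix.add_mul,
            Matrix.mul_add, Matrix.mul_assoc]
          abel
      _ = _ := by rw [h1, h2]; simp [Matrix.mul_assoc]
  have hSpsd : (S0 + M).PosSemidef := by
    rw [← hid]
    have := hGi.posSemidef.conjTranspose_mul_mul_same (G * D + EK)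
    rwa [Matrix.conjTranspose_eq_transpose_of_trivial] at this
  -- continuity of quadratic forms
  have contQF : ∀ A : Matrix (Fin N) (Fin N) ℝ,
      Continuous fun v : Fin N → ℝ => v ⬝ᵥ A.mulVec v := by
    intro A
    simp only [dotProduct, Matrix.mulVec]
    exact continuous_finset_sum _ fun i _ => (continuous_apply i).mul
      (continuous_finset_sum _ fun j _ => continuous_const.mul (continuous_apply j))
  -- pointwise bound
  have hPW : ∀ ω, (v0 ω ⬝ᵥ ΨK.mulVec (v0 ω)) - (v0 ω ⬝ᵥ Ψs.mulVec (v0 ω))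
      ≤ ∑ i : Fin N, ∑ j : Fin N, M i j * ∑' t : ℕ,
        (Θs ^ t).mulVec (v0 ω) i * (Θs ^ t).mulVec (v0 ω) j := by
    intro ω
    set x : ℕ → Fin N → ℝ := fun t => (Θs ^ t).mulVec (v0 ω) with hx
    have hstep : ∀ t, x (t + 1) = Θs.mulVec (x t) := by
      intro t
      rw [hx]
      simp only [pow_succ']
      rw [← Matrix.mulVec_mulVec]
    set f : ℕ → ℝ := fun t => x t ⬝ᵥ ΨK.mulVec (x t) - x t ⬝ᵥ Ψs.mulVec (x t) with hfdef
    set g : ℕ → ℝ := fun t => x t ⬝ᵥ M.mulVec (x t) with hgdef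
    have hgnn : ∀ t, 0 ≤ g t := by
      intro t
      have := hM.dotProduct_mulVec_nonneg (x t)
      simpa using this
    have hg_eq : ∀ t, g t = ∑ i : Fin N, ∑ j : Fin N, M i j * (x t i * x t j) := by
      intro t
      rw [hgdef]
      simp only [dotProduct, Matrix.mulVec, Finset.mul_sum]
      exact Finset.sum_congr rfl fun i _ => Finset.sum_congr rfl fun j _ => by ring
    have hsum2 : ∀ i j : Fin N, Summable (fun t => M i j * (x t i * x t j)) :=
      fun i j => (hSum ω i j).mul_left _
    have hgsum : Summable g := by
      have : Summable (fun t => ∑ i : Fin N, ∑ j : Fin N, M i j * (x t i * x t j)) :=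
        summable_sum fun i _ => summable_sum fun j _ => hsum2 i j
      exact this.congr fun t => (hg_eq t).symm
    -- quadratic form transport
    have hq : ∀ (A : Matrix (Fin N) (Fin N) ℝ) (y : Fin N → ℝ),
        (Θs.mulVec y) ⬝ᵥ A.mulVec (Θs.mulVec y) = y ⬝ᵥ (Θsᵀ * A * Θs).mulVec y := by
      intro A y
      rw [← Matrix.mulVec_mulVec, ← Matrix.mulVec_mulVec, Matrix.dotProduct_mulVec y,
        Matrix.vecMul_transpose, Matrix.mulVec_mulVec]
    -- one-step inequality
    have hstep_le : ∀ t, f t - f (t + 1) ≤ g t := by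
      intro t
      have h3 : Ψs - Θsᵀ * Ψs * Θs = Qc + Ksᵀ * R * Ks := by
        have h := congrArg Neg.neg hSteins
        simpa [neg_sub, neg_neg] using h
      have h4 : ΨK - Θsᵀ * ΨK * Θs = Qc + Ksᵀ * R * Ks - S0 := by
        rw [← keyA]; abel
      have hmat : ΨK - Θsᵀ * ΨK * Θs - (Ψs - Θsᵀ * Ψs * Θs) = -S0 := by
        rw [h3, h4]; abel
      have e1 := congrArg (fun A : Matrix (Fin N) (Fin N) ℝ => x t ⬝ᵥ A.mulVec (x t)) hmat
      simp only [Matrix.sub_mulVec, Matrix.neg_mulVec, dotProduct_sub, dotProduct_neg] at e1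
      have hpos := hSpsd.dotProduct_mulVec_nonneg (x t)
      simp only [star_trivial, Matrix.add_mulVec, dotProduct_add] at hpos
      rw [hfdef]
      simp only [hstep t, hq ΨK (x t), hq Ψs (x t)]
      rw [hgdef]
      dsimp only
      linarith
    -- telescoping and limit
    have hf_lim : Tendsto f atTop (nhds 0) := by
      have hc : Continuous fun v : Fin N → ℝ =>
          v ⬝ᵥ ΨK.mulVec v - v ⬝ᵥ Ψs.mulVec v := (contQF ΨK).sub (contQF Ψs)
      have := (hc.tendsto 0).comp (hconvs ω)
      simpa only [Function.comp_def, zero_dotProduct, Matrix.mulVec_zero, dotProduct_zero,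
        sub_self] using this
    have hf0_le : f 0 ≤ ∑' t, g t := by
      have hT : ∀ T : ℕ, f 0 - f T ≤ ∑' t, g t := by
        intro T
        have e2 : ∑ t ∈ Finset.range T, (f t - f (t + 1)) = f 0 - f T :=
          Finset.sum_range_sub' f T
        calc f 0 - f T = ∑ t ∈ Finset.range T, (f t - f (t + 1)) := e2.symm
          _ ≤ ∑ t ∈ Finset.range T, g t :=
              Finset.sum_le_sum fun t _ => hstep_le t
          _ ≤ ∑' t, g t := Summable.sum_le_tsum _ (fun t _ => hgnn t) hgsum
      have htend : Tendsto (fun T => f 0 - f T) atTop (nhds (f 0 - 0)) :=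
        tendsto_const_nhds.sub hf_lim
      rw [sub_zero] at htend
      exact le_of_tendsto htend (Filter.Eventually.of_forall hT)
    have hf0 : f 0 = (v0 ω ⬝ᵥ ΨK.mulVec (v0 ω)) - (v0 ω ⬝ᵥ Ψs.mulVec (v0 ω)) := by
      rw [hfdef]
      simp [hx]
    have htsum : ∑' t, g t = ∑ i : Fin N, ∑ j : Fin N, M i j * ∑' t, (x t i * x t j) := by
      calc ∑' t, g t = ∑' t, ∑ i : Fin N, ∑ j : Fin N, M i j * (x t i * x t j) :=
            tsum_congr hg_eq
        _ = ∑ i : Fin N, ∑' t, ∑ j : Fin N, M i j * (x t i * x t j) :=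
            Summable.tsum_finsetSum fun i _ => summable_sum fun j _ => hsum2 i j
        _ = ∑ i : Fin N, ∑ j : Fin N, ∑' t, M i j * (x t i * x t j) :=
            Finset.sum_congr rfl fun i _ => Summable.tsum_finsetSum fun j _ => hsum2 i j
        _ = ∑ i : Fin N, ∑ j : Fin N, M i j * ∑' t, (x t i * x t j) :=
            Finset.sum_congr rfl fun i _ => Finset.sum_congr rfl fun j _ =>
              tsum_mul_left
    rw [hf0, htsum] at hf0_le
    simpa only [hx] using hf0_le
  -- integrate
  have hFint : Integrable (fun ω => ∑ i : Fin N, ∑ j : Fin N, M i j * ∑' t : ℕ,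
      (Θs ^ t).mulVec (v0 ω) i * (Θs ^ t).mulVec (v0 ω) j) μ :=
    integrable_finset_sum _ fun i _ => integrable_finset_sum _ fun j _ =>
      (hIntV i j).const_mul _
  calc (∫ ω, v0 ω ⬝ᵥ ΨK.mulVec (v0 ω) ∂μ) - (∫ ω, v0 ω ⬝ᵥ Ψs.mulVec (v0 ω) ∂μ)
      = ∫ ω, ((v0 ω ⬝ᵥ ΨK.mulVec (v0 ω)) - (v0 ω ⬝ᵥ Ψs.mulVec (v0 ω))) ∂μ :=
        (integral_sub hIntK hInts).symm
    _ ≤ ∫ ω, ∑ i : Fin N, ∑ j : Fin N, M i j * ∑' t : ℕ,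
          (Θs ^ t).mulVec (v0 ω) i * (Θs ^ t).mulVec (v0 ω) j ∂μ :=
        integral_mono (hIntK.sub hInts) hFint hPW
    _ = ∑ i : Fin N, ∑ j : Fin N, M i j * Vs i j := by
        rw [integral_finset_sum _ fun i _ => integrable_finset_sum _ fun j _ =>
          (hIntV i j).const_mul (M i j)]
        refine Finset.sum_congr rfl fun i _ => ?_
        rw [integral_finset_sum _ fun j _ => (hIntV i j).const_mul (M i j)]
        refine Finset.sum_congr rfl fun j _ => ?_
        rw [integral_const_mul, hVs i j]
    _ = (Vs * EKᵀ * G⁻¹ * EK).trace := by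
        have hassoc : Vs * EKᵀ * G⁻¹ * EK = Vs * M := by
          rw [hMdef]; simp [Matrix.mul_assoc]
        rw [hassoc]
        have hMsym : ∀ i j, M j i = M i j := by
          intro i j
          conv_lhs => rw [← hMT]
          rfl
        calc ∑ i : Fin N, ∑ j : Fin N, M i j * Vs i j
            = ∑ i : Fin N, ∑ j : Fin N, Vs i j * M j i := by
              refine Finset.sum_congr rfl fun i _ => Finset.sum_congr rfl fun j _ => ?_
              rw [hMsym i j]; ring
          _ = (Vs * M).trace := by
              simp [Matrix.trace, Matrix.diag, Matrix.mul_apply]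
end
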